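/- Let X be a regular topological space and let 𝓕 be the family of all closed subsets of X that are paracompact in X. Then X is totally 𝓕-normal. -/
import Mathlib


universe u

open Cardinal Set Topology

/-- `X` is `𝓕`-regular: any `F ∈ 𝓕` and point `x ∉ F` can be separated by disjoint open sets. -/
def FRegular (X : Type u) [TopologicalSpace X] (F : Set (Set X)) : Prop :=
  ∀ A ∈ F, ∀ x : X, x ∉ A → ∃ U V : Set X,
    IsOpen U ∧ IsOpen V ∧ A ⊆ U ∧ x ∈ V ∧ Disjoint U V

/-- `X` is strongly `𝓕`-regular: any `F ∈ 𝓕` and point `x ∉ F` can be separated by open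
sets with disjoint closures. -/
def StronglyFRegular (X : Type u) [TopologicalSpace X] (F : Set (Set X)) : Prop :=
  ∀ A ∈ F, ∀ x : X, x ∉ A → ∃ U V : Set X,
    IsOpen U ∧ IsOpen V ∧ A ⊆ U ∧ x ∈ V ∧ closure U ∩ closure V = ∅

/-- `X` is `𝓕`-normal: any two disjoint members of `𝓕` can be separated by disjoint open sets. -/
def FNormal (X : Type u) [TopologicalSpace X] (F : Set (Set X)) : Prop :=
  ∀ A ∈ F, ∀ B ∈ F, Disjoint A B → ∃ U V : Set X,
    IsOpen U ∧ IsOpen V ∧ A ⊆ U ∧ B ⊆ V ∧ Disjoint U V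

/-- `X` is strongly `𝓕`-normal: any two disjoint members of `𝓕` can be separated by
open sets with disjoint closures. -/
def StronglyFNormal (X : Type u) [TopologicalSpace X] (F : Set (Set X)) : Prop :=
  ∀ A ∈ F, ∀ B ∈ F, Disjoint A B → ∃ U V : Set X,
    IsOpen U ∧ IsOpen V ∧ A ⊆ U ∧ B ⊆ V ∧ closure U ∩ closure V = ∅

/-- `X` is totally `𝓕`-normal: any member of `𝓕` and any closed set disjoint from it can be
separated by disjoint open sets. -/
def TotallyFNormal (X : Type u) [TopologicalSpace X] (F : Set (Set X)) : Prop :=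
  ∀ A ∈ F, ∀ B : Set X, IsClosed B → Disjoint A B → ∃ U V : Set X,
    IsOpen U ∧ IsOpen V ∧ A ⊆ U ∧ B ⊆ V ∧ Disjoint U V

/-- A subset `Y` of a topological space `X` is paracompact in `X` if every cover of `Y` by open
subsets of `X` admits a locally finite (in `X`) refinement by open subsets of `X` covering `Y`. -/
def ParacompactIn (X : Type u) [TopologicalSpace X] (Y : Set X) : Prop :=
  ∀ U : Set (Set X), (∀ u ∈ U, IsOpen u) → Y ⊆ ⋃₀ U →
    ∃ V : Set (Set X), (∀ v ∈ V, IsOpen v) ∧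
      LocallyFinite (fun v : V => (v : Set X)) ∧
      Y ⊆ ⋃₀ V ∧ ∀ v ∈ V, ∃ u ∈ U, v ⊆ u

/-- Every regular space `X` is totally `𝓕`-normal, where `𝓕` is the family of all closed
subsets of `X` that are paracompact in `X`. -/
theorem totallyFNormal_of_regularSpace {X : Type u} [TopologicalSpace X] [RegularSpace X] :
    TotallyFNormal X {A : Set X | IsClosed A ∧ ParacompactIn X A} := by
  rintro A ⟨hAc, hApara⟩ B hB hAB
  have hcov : ∀ x ∈ A, ∃ u : Set X, IsOpen u ∧ x ∈ u ∧ closure u ⊆ Bᶜ := by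
    intro x hx
    have hxB : x ∈ Bᶜ := fun h => (Set.disjoint_left.1 hAB) hx h
    obtain ⟨t, ht, htc, hts⟩ := exists_mem_nhds_isClosed_subset (hB.isOpen_compl.mem_nhds hxB)
    exact ⟨interior t, isOpen_interior, mem_interior_iff_mem_nhds.2 ht,
      (closure_minimal interior_subset htc).trans hts⟩
  choose! u hu hxu hucl using hcov
  obtain ⟨V, hVopen, hVlf, hVcov, hVref⟩ := hApara (u '' A)
    (by rintro _ ⟨x, hx, rfl⟩; exact hu x hx)
    (fun x hx => ⟨u x, ⟨x, hx, rfl⟩, hxu x hx⟩)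
  refine ⟨⋃₀ V, (⋃ v : V, closure (v : Set X))ᶜ, isOpen_sUnion hVopen, ?_, hVcov, ?_, ?_⟩
  · exact (hVlf.closure.isClosed_iUnion fun v => isClosed_closure).isOpen_compl
  · intro b hb
    simp only [Set.mem_compl_iff, Set.mem_iUnion]
    rintro ⟨⟨v, hv⟩, hbv⟩
    obtain ⟨w, ⟨x, hx, rfl⟩, hvw⟩ := hVref v hv
    exact hucl x hx (closure_mono hvw hbv) hb
  · rw [Set.disjoint_left]
    rintro a ⟨v, hv, hav⟩ ha
    exact ha (Set.mem_iUnion.2 ⟨⟨v, hv⟩, subset_closure hav⟩)
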